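/- Function classes induced by balance tests satisfy 18-representative labeling: if F maps reals to a label set Y of size at most 9 such that for every f ∈ F and every sorted input list the preimage of each label is a contiguous range of the sorted inputs, then for any input X of length n and any f ∈ F there exists a subset L of indices with |L| ≤ 18 such that any g ∈ F agreeing with f on the entries indexed by L agrees with f on all entries. -/

import Mathlib

/-- Balance-test function classes satisfy 18-representative labeling: if every
f ∈ F maps into a label set Y with |Y| ≤ 9 and has the contiguous-preimage property
on the sorted input X (the indices mapped to a given label form a contiguous range),
then for every f ∈ F there is a set L of at most 18 indices such that any g ∈ F
agreeing with f on the entries indexed by L agrees with f on all entries. -/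
theorem stmt_5 {Y : Type*} [Fintype Y] (hY : Fintype.card Y ≤ 9)
    (n : ℕ) (X : Fin n → ℝ) (hX : Monotone X)
    (F : Set (ℝ → Y))
    (hcontig : ∀ f ∈ F, ∀ i j k : Fin n, i ≤ j → j ≤ k →
      f (X i) = f (X k) → f (X j) = f (X i)) :
    ∀ f ∈ F, ∃ L : Finset (Fin n), L.card ≤ 18 ∧
      ∀ g ∈ F, (∀ i ∈ L, g (X i) = f (X i)) → ∀ i, g (X i) = f (X i) := by
  classical
  intro f hf
  set S : Y → Finset (Fin n) := fun y => Finset.univ.filter (fun i => f (X i) = y) with hS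
  refine ⟨Finset.univ.biUnion (fun y : Y =>
    if h : (S y).Nonempty then {(S y).min' h, (S y).max' h} else ∅), ?_, ?_⟩
  · calc (Finset.univ.biUnion (fun y : Y =>
        if h : (S y).Nonempty then {(S y).min' h, (S y).max' h} else ∅)).card
        ≤ ∑ y : Y, (if h : (S y).Nonempty then ({(S y).min' h, (S y).max' h} : Finset (Fin n)) else ∅).card :=
          Finset.card_biUnion_le
      _ ≤ ∑ _y : Y, 2 := by
          apply Finset.sum_le_sum
          intro y _
          split
          · exact (Finset.card_insert_le _ _).trans (by simp)
          · simp
      _ = 2 * Fintype.card Y := by simp [mul_comm]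
      _ ≤ 18 := by omega
  · intro g hg hagree i
    have hi : i ∈ S (f (X i)) := by simp [hS]
    have hne : (S (f (X i))).Nonempty := ⟨i, hi⟩
    set a := (S (f (X i))).min' hne
    set b := (S (f (X i))).max' hne
    have ha : f (X a) = f (X i) := by
      have := (S (f (X i))).min'_mem hne
      simpa [hS] using this
    have hb : f (X b) = f (X i) := by
      have := (S (f (X i))).max'_mem hne
      simpa [hS] using this
    have haL : a ∈ Finset.univ.biUnion (fun y : Y =>
        if h : (S y).Nonempty then {(S y).min' h, (S y).max' h} else ∅) := by
      refine Finset.mem_biUnion.2 ⟨f (X i), Finset.mem_univ _, ?_⟩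
      simp [hne]
      exact Or.inl rfl
    have hbL : b ∈ Finset.univ.biUnion (fun y : Y =>
        if h : (S y).Nonempty then {(S y).min' h, (S y).max' h} else ∅) := by
      refine Finset.mem_biUnion.2 ⟨f (X i), Finset.mem_univ _, ?_⟩
      simp [hne]
      exact Or.inr rfl
    have hga : g (X a) = f (X i) := (hagree a haL).trans ha
    have hgb : g (X b) = f (X i) := (hagree b hbL).trans hb
    have h1 : a ≤ i := (S (f (X i))).min'_le i hi
    have h2 : i ≤ b := (S (f (X i))).le_max' i hi
    have := hcontig g hg a i b h1 h2 (hga.trans hgb.symm)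
    rw [this, hga]
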